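/- Fix integers n ≥ 1, N ≥ 1 and l_1,…,l_N ≥ 1, set B = B_{l_1} ⊗ ⋯ ⊗ B_{l_N}, and for k ∈ ℤ let i_k be the unique element of {0,1,…,n} with i_k ≡ −k (mod n+1). There exists a constant C (depending only on n, l_1,…,l_N) such that for every M ≥ 1, every u = (u_1,…,u_{n+1}) ∈ B_M with u_{n+1} ≥ u_b + C for all 1 ≤ b ≤ n, and every x ∈ B, defining u^(k) ⊗ x^(k) = S_{i_k} S_{i_{k−1}} ⋯ S_{i_1}(u ⊗ x) in B_M ⊗ B (with S_{i_1} applied first), one has ε_{i_k}(u^(k)) = φ_{i_k}(u^(k−1) ⊗ x^(k−1)) for every 1 ≤ k ≤ n. -/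

import Mathlib

/-- Iterated application of a partial map: `OptIter g m a` is `g^m a`. -/
def OptIter {α : Type} (g : α → Option α) : ℕ → α → Option α
  | 0, a => some a
  | m + 1, a => (g a).bind (OptIter g m)

/-- Apply the partial maps `g 1`, `g 2`, ..., `g m` in this order. -/
def ChainOpt {α : Type} (g : ℕ → α → Option α) (m : ℕ) (a : α) : Option α :=
  (List.range m).foldl (fun acc j => acc.bind (g (j + 1))) (some a)

/-- A set with partial Kashiwara-type operators indexed by `{0, 1, ..., n}`. -/
structure PreCrystal (n : ℕ) where
  carrier : Type
  e : Fin (n + 1) → carrier → Option carrier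
  f : Fin (n + 1) → carrier → Option carrier

namespace PreCrystal

variable {n : ℕ}

/-- `ε_i(b) = max {m ≥ 0 : ẽ_i^m b is defined}`. -/
noncomputable def eps (C : PreCrystal n) (i : Fin (n + 1)) (b : C.carrier) : ℕ :=
  sSup {m | OptIter (C.e i) m b ≠ none}

/-- `φ_i(b) = max {m ≥ 0 : f̃_i^m b is defined}`. -/
noncomputable def phi (C : PreCrystal n) (i : Fin (n + 1)) (b : C.carrier) : ℕ :=
  sSup {m | OptIter (C.f i) m b ≠ none}

/-- `ẽ_i^max b = ẽ_i^{ε_i(b)} b`. -/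
noncomputable def eMax (C : PreCrystal n) (i : Fin (n + 1)) (b : C.carrier) : Option C.carrier :=
  OptIter (C.e i) (C.eps i b) b

/-- The Weyl group operator `S_i`: `f̃_i^{φ_i(b)-ε_i(b)} b` if `φ_i(b) ≥ ε_i(b)`,
and `ẽ_i^{ε_i(b)-φ_i(b)} b` if `φ_i(b) ≤ ε_i(b)`. -/
noncomputable def S (C : PreCrystal n) (i : Fin (n + 1)) (b : C.carrier) : Option C.carrier :=
  if C.eps i b ≤ C.phi i b then OptIter (C.f i) (C.phi i b - C.eps i b) b
  else OptIter (C.e i) (C.eps i b - C.phi i b) b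

/-- The tensor product `C ⊗ D` of two crystals, with the Kashiwara tensor product rule. -/
noncomputable def tensor (C D : PreCrystal n) : PreCrystal n where
  carrier := C.carrier × D.carrier
  e := fun i p =>
    if D.eps i p.2 ≤ C.phi i p.1 then (C.e i p.1).map (fun b => (b, p.2))
    else (D.e i p.2).map (fun b => (p.1, b))
  f := fun i p =>
    if D.eps i p.2 < C.phi i p.1 then (C.f i p.1).map (fun b => (b, p.2))
    else (D.f i p.2).map (fun b => (p.1, b))

end PreCrystal

/-- Kashiwara raising operator `ẽ_i` of type `A_n^{(1)}` on `(n+1)`-tuples of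
nonnegative integers (zero-indexed: coordinate `j` is `x_{j+1}`): defined iff the
coordinate at index `i` is positive, it adds 1 at index `i-1` (cyclically) and
subtracts 1 at index `i`. -/
def eA (n : ℕ) (i : Fin (n + 1)) (x : Fin (n + 1) → ℕ) : Option (Fin (n + 1) → ℕ) :=
  if 0 < x i then
    some (Function.update (Function.update x (i - 1) (x (i - 1) + 1)) i (x i - 1))
  else none

/-- Kashiwara lowering operator `f̃_i` of type `A_n^{(1)}`: defined iff the coordinate
at index `i-1` is positive, it subtracts 1 at index `i-1` and adds 1 at index `i`. -/
def fA (n : ℕ) (i : Fin (n + 1)) (x : Fin (n + 1) → ℕ) : Option (Fin (n + 1) → ℕ) :=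
  if 0 < x (i - 1) then
    some (Function.update (Function.update x i (x i + 1)) (i - 1) (x (i - 1) - 1))
  else none

/-- The crystal operators of type `A_n^{(1)}` on all `(n+1)`-tuples; the crystal `B_l`
is the subset of tuples with coordinate sum `l`. -/
def BA (n : ℕ) : PreCrystal n where
  carrier := Fin (n + 1) → ℕ
  e := eA n
  f := fA n

/-- The unique element of `{0, ..., n}` congruent to `-k` modulo `n+1`. -/
def negIdx (n : ℕ) (k : ℤ) : Fin (n + 1) :=
  ⟨((-k) % ((n : ℤ) + 1)).toNat, by
    have h1 := Int.emod_nonneg (-k) (by omega : ((n : ℤ) + 1) ≠ 0)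
    have h2 := Int.emod_lt_of_pos (-k) (by omega : (0 : ℤ) < (n : ℤ) + 1)
    omega⟩

/-- The cyclic shift `σ : (x_1, ..., x_{n+1}) ↦ (x_2, ..., x_{n+1}, x_1)`. -/
def shiftA (n : ℕ) (x : Fin (n + 1) → ℕ) : Fin (n + 1) → ℕ := fun j => x (j + 1)

/-- The map `t(x_1, ..., x_{n+1}) = (x_n, x_{n-1}, ..., x_1)`. -/
def tA (n : ℕ) (x : Fin (n + 1) → ℕ) : Fin n → ℕ :=
  fun k => x ⟨n - 1 - (k : ℕ), by omega⟩

/-- The `(N+1)`-fold tensor power `B ⊗ ... ⊗ B`, associated to the left. -/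
noncomputable def BPow (n : ℕ) : ℕ → PreCrystal n
  | 0 => BA n
  | N + 1 => (BPow n N).tensor (BA n)

/-- The element `b_1 ⊗ ... ⊗ b_{N+1}` of the `(N+1)`-fold tensor power. -/
noncomputable def tensorOf (n : ℕ) : (N : ℕ) → (Fin (N + 1) → (Fin (n + 1) → ℕ)) → (BPow n N).carrier
  | 0, b => b 0
  | N + 1, b => (tensorOf n N (fun j => b j.castSucc), b (Fin.last (N + 1)))

/-- Membership in `B_{l_1} ⊗ ... ⊗ B_{l_{N+1}}`: each factor has coordinate sum `l_j`. -/
def memBPow (n : ℕ) : (N : ℕ) → (Fin (N + 1) → ℕ) → (BPow n N).carrier → Prop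
  | 0, l, x => ∑ j, x j = l 0
  | N + 1, l, p => memBPow n N (fun j => l j.castSucc) p.1 ∧ ∑ j, p.2 j = l (Fin.last (N + 1))

/-- The componentwise cyclic shift `σ_B = σ ⊗ ... ⊗ σ` on a tensor power. -/
noncomputable def shiftPow (n : ℕ) : (N : ℕ) → (BPow n N).carrier → (BPow n N).carrier
  | 0, x => shiftA n x
  | N + 1, p => (shiftPow n N p.1, shiftA n p.2)
namespace L33

theorem optIter_zero {α : Type} (g : α → Option α) (a : α) : OptIter g 0 a = some a := rfl

theorem optIter_succ {α : Type} (g : α → Option α) (m : ℕ) (a : α) :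
    OptIter g (m + 1) a = (g a).bind (OptIter g m) := rfl

/-- `d` is an exact "degree" function for the partial map `g`. -/
def IsDeg {α : Type} (g : α → Option α) (d : α → ℕ) : Prop :=
  (∀ a, g a = none ↔ d a = 0) ∧ (∀ a b, g a = some b → d a = d b + 1)

theorem optIter_some_of_le {α : Type} {g : α → Option α} {d : α → ℕ} (h : IsDeg g d) :
    ∀ m a, m ≤ d a → ∃ b, OptIter g m a = some b ∧ d b + m = d a := by
  intro m
  induction m with
  | zero => intro a _; exact ⟨a, rfl, by simp⟩
  | succ m ih =>
    intro a ha
    have hg : g a ≠ none := by rw [Ne, h.1]; omega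
    obtain ⟨c, hc⟩ := Option.ne_none_iff_exists'.mp hg
    have hd := h.2 a c hc
    obtain ⟨b, hb, hdb⟩ := ih c (by omega)
    exact ⟨b, by simp [optIter_succ, hc, hb], by omega⟩

theorem optIter_none_of_gt {α : Type} {g : α → Option α} {d : α → ℕ} (h : IsDeg g d) :
    ∀ m a, d a < m → OptIter g m a = none := by
  intro m
  induction m with
  | zero => intro a ha; omega
  | succ m ih =>
    intro a ha
    cases hc : g a with
    | none => simp [optIter_succ, hc]
    | some c =>
      have hd := h.2 a c hc
      simp [optIter_succ, hc, ih c (by omega)]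

theorem sSup_eq_of_isDeg {α : Type} {g : α → Option α} {d : α → ℕ} (h : IsDeg g d) (a : α) :
    sSup {m | OptIter g m a ≠ none} = d a := by
  have hset : {m | OptIter g m a ≠ none} = Set.Iic (d a) := by
    ext m
    simp only [Set.mem_setOf_eq, Set.mem_Iic]
    constructor
    · intro hm
      by_contra hc
      exact hm (optIter_none_of_gt h m a (by omega))
    · intro hm
      obtain ⟨b, hb, _⟩ := optIter_some_of_le h m a hm
      simp [hb]
  rw [hset]
  exact csSup_Iic

theorem optIter_cross {α : Type} {g : α → Option α} {d' : α → ℕ}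
    (h : ∀ a b, g a = some b → d' b = d' a + 1) :
    ∀ m a b, OptIter g m a = some b → d' b = d' a + m := by
  intro m
  induction m with
  | zero => intro a b hb; simp only [optIter_zero, Option.some.injEq] at hb; simp [hb]
  | succ m ih =>
    intro a b hb
    rw [optIter_succ] at hb
    cases hc : g a with
    | none => simp [hc] at hb
    | some c =>
      rw [hc] at hb
      simp only [Option.bind_some] at hb
      have := ih c b hb
      have := h a c hc
      omega

theorem optIter_pres {α : Type} {g : α → Option α} {P : α → Prop}
    (hg : ∀ a b, g a = some b → P a → P b) :
    ∀ m a b, OptIter g m a = some b → P a → P b := by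
  intro m
  induction m with
  | zero => intro a b hb ha; simp only [optIter_zero, Option.some.injEq] at hb; rwa [← hb]
  | succ m ih =>
    intro a b hb ha
    rw [optIter_succ] at hb
    cases hc : g a with
    | none => simp [hc] at hb
    | some c =>
      rw [hc] at hb
      simp only [Option.bind_some] at hb
      exact ih c b hb (hg a c hc ha)

end L33
namespace L33

variable {n : ℕ}

/-- Exact degree data for a pre-crystal: `E i` computes `ε_i`, `F i` computes `φ_i`,
and the operators change the degrees as expected. -/
structure DegS (C : PreCrystal n) where
  E : Fin (n + 1) → C.carrier → ℕ
  F : Fin (n + 1) → C.carrier → ℕ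
  isDegE : ∀ i, IsDeg (C.e i) (E i)
  isDegF : ∀ i, IsDeg (C.f i) (F i)
  e_F : ∀ i a b, C.e i a = some b → F i b = F i a + 1
  f_E : ∀ i a b, C.f i a = some b → E i b = E i a + 1

theorem DegS.eps_eq {C : PreCrystal n} (D : DegS C) (i : Fin (n + 1)) (a : C.carrier) :
    C.eps i a = D.E i a :=
  sSup_eq_of_isDeg (D.isDegE i) a

theorem DegS.phi_eq {C : PreCrystal n} (D : DegS C) (i : Fin (n + 1)) (a : C.carrier) :
    C.phi i a = D.F i a :=
  sSup_eq_of_isDeg (D.isDegF i) a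

theorem sub_one_ne (hn : 1 ≤ n) (i : Fin (n + 1)) : i - 1 ≠ i := by
  intro h
  have h1 : (1 : Fin (n + 1)) = 0 := by
    have := sub_eq_self.mp h
    exact this
  have := congrArg Fin.val h1
  simp [Fin.val_one'] at this
  omega

/-- Degree data for the basic crystal. -/
def degBA (hn : 1 ≤ n) : DegS (BA n) where
  E := fun i u => u i
  F := fun i u => u (i - 1)
  isDegE := by
    intro i
    constructor
    · intro a
      simp only [BA, eA]
      split <;> simp <;> omega
    · intro a b hb
      simp only [BA, eA] at hb
      split at hb
      · rename_i hpos
        have hb := Option.some.inj hb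
        subst hb
        simp only [Function.update_self]
        omega
      · exact absurd hb (by simp)
  isDegF := by
    intro i
    constructor
    · intro a
      simp only [BA, fA]
      split <;> simp <;> omega
    · intro a b hb
      simp only [BA, fA] at hb
      split at hb
      · rename_i hpos
        have hb := Option.some.inj hb
        subst hb
        simp only [Function.update_self]
        omega
      · exact absurd hb (by simp)
  e_F := by
    intro i a b hb
    simp only [BA, eA] at hb
    split at hb
    · rename_i hpos
      have hb := Option.some.inj hb
      subst hb
      simp only [Function.update_of_ne (sub_one_ne hn i), Function.update_self]
      exact Function.update_self _ _ _
    · exact absurd hb (by simp)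
  f_E := by
    intro i a b hb
    simp only [BA, fA] at hb
    split at hb
    · rename_i hpos
      have hb := Option.some.inj hb
      subst hb
      simp only [Function.update_of_ne (Ne.symm (sub_one_ne hn i)), Function.update_self]
      exact Function.update_self _ _ _
    · exact absurd hb (by simp)

end L33
namespace L33

variable {n : ℕ} {C D : PreCrystal n}

theorem tensor_e_eq (dC : DegS C) (dD : DegS D) (i : Fin (n + 1)) (p : (C.tensor D).carrier) :
    (C.tensor D).e i p =
      if dD.E i p.2 ≤ dC.F i p.1 then (C.e i p.1).map (fun b => (b, p.2))
      else (D.e i p.2).map (fun b => (p.1, b)) := by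
  simp only [PreCrystal.tensor, dD.eps_eq, dC.phi_eq]

theorem tensor_f_eq (dC : DegS C) (dD : DegS D) (i : Fin (n + 1)) (p : (C.tensor D).carrier) :
    (C.tensor D).f i p =
      if dD.E i p.2 < dC.F i p.1 then (C.f i p.1).map (fun b => (b, p.2))
      else (D.f i p.2).map (fun b => (p.1, b)) := by
  simp only [PreCrystal.tensor, dD.eps_eq, dC.phi_eq]

theorem tensor_isDegE (dC : DegS C) (dD : DegS D) (i : Fin (n + 1)) :
    IsDeg ((C.tensor D).e i)
      (fun p => dC.E i p.1 + (dD.E i p.2 - dC.F i p.1)) := by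
  constructor
  · intro p
    show (C.tensor D).e i p = none ↔ dC.E i p.1 + (dD.E i p.2 - dC.F i p.1) = 0
    rw [tensor_e_eq dC dD]
    by_cases h : dD.E i p.2 ≤ dC.F i p.1
    · rw [if_pos h]; refine Option.map_eq_none_iff.trans ?_; rw [(dC.isDegE i).1]
      omega
    · rw [if_neg h]; refine Option.map_eq_none_iff.trans ?_; rw [(dD.isDegE i).1]
      omega
  · intro p q hb
    show dC.E i p.1 + (dD.E i p.2 - dC.F i p.1)
        = dC.E i q.1 + (dD.E i q.2 - dC.F i q.1) + 1
    rw [tensor_e_eq dC dD] at hb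
    by_cases h : dD.E i p.2 ≤ dC.F i p.1
    · rw [if_pos h] at hb
      rcases Option.map_eq_some_iff.mp hb with ⟨a', ha', hq⟩
      subst hq
      have h1 := (dC.isDegE i).2 p.1 a' ha'
      have h2 := dC.e_F i p.1 a' ha'
      simp only
      omega
    · rw [if_neg h] at hb
      rcases Option.map_eq_some_iff.mp hb with ⟨a', ha', hq⟩
      subst hq
      have h1 := (dD.isDegE i).2 p.2 a' ha'
      have h2 := dD.e_F i p.2 a' ha'
      simp only
      omega

theorem tensor_isDegF (dC : DegS C) (dD : DegS D) (i : Fin (n + 1)) :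
    IsDeg ((C.tensor D).f i)
      (fun p => dD.F i p.2 + (dC.F i p.1 - dD.E i p.2)) := by
  constructor
  · intro p
    show (C.tensor D).f i p = none ↔ dD.F i p.2 + (dC.F i p.1 - dD.E i p.2) = 0
    rw [tensor_f_eq dC dD]
    by_cases h : dD.E i p.2 < dC.F i p.1
    · rw [if_pos h]; refine Option.map_eq_none_iff.trans ?_; rw [(dC.isDegF i).1]
      omega
    · rw [if_neg h]; refine Option.map_eq_none_iff.trans ?_; rw [(dD.isDegF i).1]
      omega
  · intro p q hb
    show dD.F i p.2 + (dC.F i p.1 - dD.E i p.2)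
        = dD.F i q.2 + (dC.F i q.1 - dD.E i q.2) + 1
    rw [tensor_f_eq dC dD] at hb
    by_cases h : dD.E i p.2 < dC.F i p.1
    · rw [if_pos h] at hb
      rcases Option.map_eq_some_iff.mp hb with ⟨a', ha', hq⟩
      subst hq
      have h1 := (dC.isDegF i).2 p.1 a' ha'
      have h2 := dC.f_E i p.1 a' ha'
      simp only
      omega
    · rw [if_neg h] at hb
      rcases Option.map_eq_some_iff.mp hb with ⟨a', ha', hq⟩
      subst hq
      have h1 := (dD.isDegF i).2 p.2 a' ha'
      have h2 := dD.f_E i p.2 a' ha'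
      simp only
      omega

theorem tensor_e_F (dC : DegS C) (dD : DegS D) (i : Fin (n + 1))
    (p q : (C.tensor D).carrier) (hb : (C.tensor D).e i p = some q) :
    dD.F i q.2 + (dC.F i q.1 - dD.E i q.2)
      = dD.F i p.2 + (dC.F i p.1 - dD.E i p.2) + 1 := by
  rw [tensor_e_eq dC dD] at hb
  by_cases h : dD.E i p.2 ≤ dC.F i p.1
  · rw [if_pos h] at hb
    rcases Option.map_eq_some_iff.mp hb with ⟨a', ha', hq⟩
    subst hq
    have h1 := (dC.isDegE i).2 p.1 a' ha'
    have h2 := dC.e_F i p.1 a' ha'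
    simp only
    omega
  · rw [if_neg h] at hb
    rcases Option.map_eq_some_iff.mp hb with ⟨a', ha', hq⟩
    subst hq
    have h1 := (dD.isDegE i).2 p.2 a' ha'
    have h2 := dD.e_F i p.2 a' ha'
    simp only
    omega

theorem tensor_f_E (dC : DegS C) (dD : DegS D) (i : Fin (n + 1))
    (p q : (C.tensor D).carrier) (hb : (C.tensor D).f i p = some q) :
    dC.E i q.1 + (dD.E i q.2 - dC.F i q.1)
      = dC.E i p.1 + (dD.E i p.2 - dC.F i p.1) + 1 := by
  rw [tensor_f_eq dC dD] at hb
  by_cases h : dD.E i p.2 < dC.F i p.1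
  · rw [if_pos h] at hb
    rcases Option.map_eq_some_iff.mp hb with ⟨a', ha', hq⟩
    subst hq
    have h1 := (dC.isDegF i).2 p.1 a' ha'
    have h2 := dC.f_E i p.1 a' ha'
    simp only
    omega
  · rw [if_neg h] at hb
    rcases Option.map_eq_some_iff.mp hb with ⟨a', ha', hq⟩
    subst hq
    have h1 := (dD.isDegF i).2 p.2 a' ha'
    have h2 := dD.f_E i p.2 a' ha'
    simp only
    omega

/-- Degree data for a tensor product crystal. -/
def degTensor (dC : DegS C) (dD : DegS D) : DegS (C.tensor D) where
  E := fun i p => dC.E i p.1 + (dD.E i p.2 - dC.F i p.1)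
  F := fun i p => dD.F i p.2 + (dC.F i p.1 - dD.E i p.2)
  isDegE := tensor_isDegE dC dD
  isDegF := tensor_isDegF dC dD
  e_F := tensor_e_F dC dD
  f_E := tensor_f_E dC dD

/-- Degree data for the tensor powers. -/
noncomputable def degBPow (hn : 1 ≤ n) : (N : ℕ) → DegS (BPow n N)
  | 0 => degBA hn
  | N + 1 => degTensor (degBPow hn N) (degBA hn)

end L33
namespace L33

variable {n : ℕ}

theorem sum_eA (hn : 1 ≤ n) {i : Fin (n + 1)} {u u' : Fin (n + 1) → ℕ}
    (h : eA n i u = some u') : ∑ j, u' j = ∑ j, u j := by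
  rw [eA] at h
  split at h
  · rename_i hpos
    simp only [Option.some.injEq] at h
    subst h
    have hne : (i - 1 : Fin (n + 1)) ∈ (Finset.univ : Finset (Fin (n + 1))) \ {i} := by
      simp [sub_one_ne hn i]
    rw [Finset.sum_update_of_mem (Finset.mem_univ i),
      Finset.sum_update_of_mem hne]
    have h2 : ∑ j, u j = u i + ∑ x ∈ Finset.univ \ {i}, u x := by
      rw [Finset.sum_eq_sum_sdiff_singleton_add (Finset.mem_univ i)]
      ring
    have h3 : ∑ x ∈ Finset.univ \ {i}, u x
        = u (i - 1) + ∑ x ∈ (Finset.univ \ {i}) \ {i - 1}, u x := by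
      rw [Finset.sum_eq_sum_sdiff_singleton_add hne]
      ring
    omega
  · exact absurd h (by simp)

theorem memBPow_e (hn : 1 ≤ n) :
    ∀ (N : ℕ) (lv : Fin (N + 1) → ℕ) (i : Fin (n + 1)) (x x' : (BPow n N).carrier),
      (BPow n N).e i x = some x' → memBPow n N lv x → memBPow n N lv x' := by
  intro N
  induction N with
  | zero =>
    intro lv i x x' hb hx
    have : ∑ j, x' j = ∑ j, x j := sum_eA hn hb
    unfold memBPow at hx ⊢
    omega
  | succ N ih =>
    intro lv i p q hb hp
    have hb' : (if (BA n).eps i p.2 ≤ (BPow n N).phi i p.1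
        then ((BPow n N).e i p.1).map (fun b => (b, p.2))
        else ((BA n).e i p.2).map (fun b => (p.1, b))) = some q := hb
    obtain ⟨hp1, hp2⟩ := hp
    split at hb'
    · rcases Option.map_eq_some_iff.mp hb' with ⟨a', ha', hq⟩
      subst hq
      exact ⟨ih _ i p.1 a' ha' hp1, hp2⟩
    · rcases Option.map_eq_some_iff.mp hb' with ⟨a', ha', hq⟩
      subst hq
      refine ⟨hp1, ?_⟩
      have : ∑ j, a' j = ∑ j, p.2 j := sum_eA hn ha'
      show ∑ j, a' j = lv (Fin.last (N + 1))
      omega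

theorem memBPow_deg_le (hn : 1 ≤ n) :
    ∀ (N : ℕ) (lv : Fin (N + 1) → ℕ) (x : (BPow n N).carrier), memBPow n N lv x →
      ∀ i, (degBPow hn N).E i x ≤ ∑ j, lv j ∧ (degBPow hn N).F i x ≤ ∑ j, lv j := by
  intro N
  induction N with
  | zero =>
    intro lv x hx i
    unfold memBPow at hx
    have h1 : ∀ j, x j ≤ ∑ j, x j := fun j =>
      Finset.single_le_sum (fun k _ => Nat.zero_le (x k)) (Finset.mem_univ j)
    have h2 : ∑ j, lv j = lv 0 := by simp [Fin.sum_univ_one]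
    constructor
    · calc (degBPow hn 0).E i x = x i := rfl
        _ ≤ ∑ j, x j := h1 i
        _ = lv 0 := hx
        _ ≤ ∑ j, lv j := by omega
    · calc (degBPow hn 0).F i x = x (i - 1) := rfl
        _ ≤ ∑ j, x j := h1 _
        _ = lv 0 := hx
        _ ≤ ∑ j, lv j := by omega
  | succ N ih =>
    intro lv p hp i
    obtain ⟨hp1, hp2⟩ := hp
    have h1 := ih _ p.1 hp1 i
    have h2 : ∀ j, p.2 j ≤ lv (Fin.last (N + 1)) := by
      intro j
      rw [← hp2]
      exact Finset.single_le_sum (fun k _ => Nat.zero_le (p.2 k)) (Finset.mem_univ j)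
    have hsum : ∑ j, lv j = (∑ j, lv (Fin.castSucc j)) + lv (Fin.last (N + 1)) :=
      Fin.sum_univ_castSucc lv
    constructor
    · calc (degBPow hn (N + 1)).E i p
          = (degBPow hn N).E i p.1 + ((degBA hn).E i p.2 - (degBPow hn N).F i p.1) := rfl
        _ ≤ (degBPow hn N).E i p.1 + (degBA hn).E i p.2 := by omega
        _ ≤ (∑ j, lv (Fin.castSucc j)) + lv (Fin.last (N + 1)) := by
            have : (degBA hn).E i p.2 = p.2 i := rfl
            have := h2 i
            omega
        _ = ∑ j, lv j := hsum.symm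
    · calc (degBPow hn (N + 1)).F i p
          = (degBA hn).F i p.2 + ((degBPow hn N).F i p.1 - (degBA hn).E i p.2) := rfl
        _ ≤ (degBA hn).F i p.2 + (degBPow hn N).F i p.1 := by omega
        _ ≤ lv (Fin.last (N + 1)) + ∑ j, lv (Fin.castSucc j) := by
            have : (degBA hn).F i p.2 = p.2 (i - 1) := rfl
            have := h2 (i - 1)
            omega
        _ = ∑ j, lv j := by omega

theorem memBPow_tensorOf :
    ∀ (N : ℕ) (lv : Fin (N + 1) → ℕ) (b : Fin (N + 1) → (Fin (n + 1) → ℕ)),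
      (∀ j, ∑ i, b j i = lv j) → memBPow n N lv (tensorOf n N b) := by
  intro N
  induction N with
  | zero =>
    intro lv b hb
    exact hb 0
  | succ N ih =>
    intro lv b hb
    exact ⟨ih _ _ (fun j => hb j.castSucc), hb (Fin.last (N + 1))⟩

end L33
namespace L33

variable {n : ℕ}

theorem T_e_pres (hn : 1 ≤ n) (N' : ℕ) (lv : Fin (N' + 1) → ℕ) (i : Fin (n + 1))
    (u0 : Fin (n + 1) → ℕ) :
    ∀ p q : (Fin (n + 1) → ℕ) × (BPow n N').carrier,
      ((BA n).tensor (BPow n N')).e i p = some q →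
      ((∀ j, j ≠ i → j ≠ i - 1 → p.1 j = u0 j) ∧ memBPow n N' lv p.2) →
      ((∀ j, j ≠ i → j ≠ i - 1 → q.1 j = u0 j) ∧ memBPow n N' lv q.2) := by
  intro p q hb hp
  have hb' : (if (BPow n N').eps i p.2 ≤ (BA n).phi i p.1
      then ((BA n).e i p.1).map (fun b => (b, p.2))
      else ((BPow n N').e i p.2).map (fun b => (p.1, b))) = some q := hb
  obtain ⟨hp1, hp2⟩ := hp
  split at hb'
  · rcases Option.map_eq_some_iff.mp hb' with ⟨a', ha', hq⟩
    subst hq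
    refine ⟨?_, hp2⟩
    intro j hj1 hj2
    simp only [BA, eA] at ha'
    split at ha'
    · have ha' := Option.some.inj ha'
      subst ha'
      show Function.update (Function.update p.1 (i - 1) (p.1 (i - 1) + 1)) i (p.1 i - 1) j = u0 j
      rw [Function.update_of_ne hj1, Function.update_of_ne hj2]
      exact hp1 j hj1 hj2
    · exact absurd ha' (by simp)
  · rcases Option.map_eq_some_iff.mp hb' with ⟨a', ha', hq⟩
    subst hq
    exact ⟨hp1, memBPow_e hn N' lv i p.2 a' ha' hp2⟩

theorem step_lemma (hn : 1 ≤ n) (N' : ℕ) (lv : Fin (N' + 1) → ℕ) (L : ℕ)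
    (hL : ∑ j, lv j ≤ L)
    (i : Fin (n + 1)) (u : Fin (n + 1) → ℕ) (x : (BPow n N').carrier)
    (hx : memBPow n N' lv x) (hdom : u (i - 1) + 2 * L + 1 ≤ u i) :
    ∃ q : (Fin (n + 1) → ℕ) × (BPow n N').carrier,
      ((BA n).tensor (BPow n N')).S i (u, x) = some q ∧
      memBPow n N' lv q.2 ∧
      (∀ j, j ≠ i → j ≠ i - 1 → q.1 j = u j) ∧
      (BA n).eps i q.1 = ((BA n).tensor (BPow n N')).phi i (u, x) ∧
      q.1 i ≤ u (i - 1) + L ∧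
      u i ≤ q.1 (i - 1) + L := by
  set dU := degBA hn with hdU
  set dX := degBPow hn N' with hdX
  set dT := degTensor dU dX with hdT
  have hbd := memBPow_deg_le hn N' lv x hx i
  have hEx : dX.E i x ≤ L := le_trans hbd.1 hL
  have hFx : dX.F i x ≤ L := le_trans hbd.2 hL
  have hE : dT.E i (u, x) = u i + (dX.E i x - u (i - 1)) := rfl
  have hF : dT.F i (u, x) = dX.F i x + (u (i - 1) - dX.E i x) := rfl
  have hlt : dT.F i (u, x) < dT.E i (u, x) := by rw [hE, hF]; omega
  have hS : ((BA n).tensor (BPow n N')).S i (u, x)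
      = OptIter (((BA n).tensor (BPow n N')).e i)
          (dT.E i (u, x) - dT.F i (u, x)) (u, x) := by
    unfold PreCrystal.S; erw [dT.eps_eq, dT.phi_eq, if_neg (by omega)]
  obtain ⟨q, hq, hdq⟩ := optIter_some_of_le (dT.isDegE i)
    (dT.E i (u, x) - dT.F i (u, x)) (u, x) (by omega)
  have hcross : dT.F i q = dT.F i (u, x) + (dT.E i (u, x) - dT.F i (u, x)) :=
    optIter_cross (fun a b hab => (dT.e_F i a b hab)) _ _ _ hq
  have hpres := optIter_pres (T_e_pres hn N' lv i u)
    (dT.E i (u, x) - dT.F i (u, x)) (u, x) q hq ⟨fun j _ _ => rfl, hx⟩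
  have hbd' := memBPow_deg_le hn N' lv q.2 hpres.2 i
  have hEx' : dX.E i q.2 ≤ L := le_trans hbd'.1 hL
  have hFx' : dX.F i q.2 ≤ L := le_trans hbd'.2 hL
  have hEq : dT.E i q = q.1 i + (dX.E i q.2 - q.1 (i - 1)) := rfl
  have hFq : dT.F i q = dX.F i q.2 + (q.1 (i - 1) - dX.E i q.2) := rfl
  refine ⟨q, by rw [hS]; exact hq, hpres.2, hpres.1, ?_, ?_, ?_⟩
  · erw [(degBA hn).eps_eq, dT.phi_eq]
    show q.1 i = dX.F i x + (u (i - 1) - dX.E i x)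
    omega
  · omega
  · omega

end L33
namespace L33

theorem negIdx_val (n k : ℕ) (hk1 : 1 ≤ k) (hk2 : k ≤ n) :
    ((negIdx n (k : ℤ)) : ℕ) = n + 1 - k := by
  show ((-(k : ℤ)) % ((n : ℤ) + 1)).toNat = n + 1 - k
  have h : (-(k : ℤ)) = ((n : ℤ) + 1 - k) + ((n : ℤ) + 1) * (-1) := by ring
  rw [h, Int.add_mul_emod_self_left, Int.emod_eq_of_lt (by omega) (by omega)]
  omega

/-- The sequence `w k = S_{i_k} ⋯ S_{i_1} (u ⊗ x)`. -/
noncomputable def wSeq (n N' : ℕ) (u : Fin (n + 1) → ℕ) (x0 : (BPow n N').carrier) :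
    ℕ → (Fin (n + 1) → ℕ) × (BPow n N').carrier
  | 0 => (u, x0)
  | m + 1 =>
      (((BA n).tensor (BPow n N')).S (negIdx n ((m + 1 : ℕ) : ℤ)) (wSeq n N' u x0 m)).getD
        (wSeq n N' u x0 m)

end L33

/-- Lemma 3.3 for type `A_n^{(1)}`: for `B = B_{l_1} ⊗ ⋯ ⊗ B_{l_N}` (here `N = N'+1`)
there is a constant `C` such that for every `M ≥ 1`, every `u ∈ B_M` with
`u_{n+1} ≥ u_b + C` for all `1 ≤ b ≤ n` (membership in `B_M[a_0]`, `a_0 = n+1`), and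
every `x = b_1 ⊗ ⋯ ⊗ b_N ∈ B`, setting
`u^{(k)} ⊗ x^{(k)} = S_{i_k} ⋯ S_{i_1}(u ⊗ x)` (the sequence `w`, `i_k ≡ -k (mod n+1)`),
one has `ε_{i_k}(u^{(k)}) = φ_{i_k}(u^{(k-1)} ⊗ x^{(k-1)})` for `1 ≤ k ≤ n`. -/
theorem stmt12 (n N' : ℕ) (hn : 1 ≤ n) (l : Fin (N' + 1) → ℕ) (hl : ∀ j, 1 ≤ l j) :
    ∃ Cst : ℕ, ∀ M : ℕ, 1 ≤ M → ∀ u : Fin (n + 1) → ℕ, ∑ j, u j = M →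
      (∀ j : Fin (n + 1), (j : ℕ) < n → u j + Cst ≤ u ⟨n, by omega⟩) →
      ∀ bf : Fin (N' + 1) → (Fin (n + 1) → ℕ), (∀ j, ∑ i, bf j i = l j) →
      ∃ w : ℕ → ((Fin (n + 1) → ℕ) × (BPow n N').carrier),
        w 0 = (u, tensorOf n N' bf) ∧
        (∀ k, 1 ≤ k → k ≤ n →
          ((BA n).tensor (BPow n N')).S (negIdx n k) (w (k - 1)) = some (w k)) ∧
        (∀ k, 1 ≤ k → k ≤ n →
          (BA n).eps (negIdx n k) (w k).1
            = ((BA n).tensor (BPow n N')).phi (negIdx n k) (w (k - 1))) := by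
  classical
  refine ⟨(n + 2) * (∑ j, l j) + 1, ?_⟩
  intro M hM u hsum hdom bf hbf
  set L : ℕ := ∑ j, l j with hLdef
  set topIdx : Fin (n + 1) := ⟨n, by omega⟩ with htop
  have hdom' : ∀ j : Fin (n + 1), (j : ℕ) < n → u j + ((n + 2) * L + 1) ≤ u topIdx := hdom
  set w := L33.wSeq n N' u (tensorOf n N' bf) with hwdef
  have hw0 : w 0 = (u, tensorOf n N' bf) := rfl
  have hwsucc : ∀ m : ℕ, w (m + 1) = (((BA n).tensor (BPow n N')).S (negIdx n ((m + 1 : ℕ) : ℤ)) (w m)).getD (w m) :=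
    fun m => rfl
  have key : ∀ k, k ≤ n →
      memBPow n N' l (w k).2 ∧
      (∀ j : Fin (n + 1), (j : ℕ) < n - k → (w k).1 j = u j) ∧
      (∀ j : Fin (n + 1), (j : ℕ) = n - k → u topIdx ≤ (w k).1 j + k * L) ∧
      (1 ≤ k → ((BA n).tensor (BPow n N')).S (negIdx n (k : ℤ)) (w (k - 1)) = some (w k) ∧
        (BA n).eps (negIdx n (k : ℤ)) (w k).1 = ((BA n).tensor (BPow n N')).phi (negIdx n (k : ℤ)) (w (k - 1))) := by
    intro k
    induction k with
    | zero =>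
      intro _
      refine ⟨L33.memBPow_tensorOf N' l bf hbf, fun j _ => rfl, ?_, by omega⟩
      intro j hj
      have hj' : j = topIdx := by
        apply Fin.ext
        rw [htop]
        show (j : ℕ) = n
        omega
      rw [hj']
      show u topIdx ≤ u topIdx + 0 * L
      omega
    | succ m ih =>
      intro hk
      obtain ⟨K1, K2, K3, _⟩ := ih (by omega)
      set i := negIdx n ((m + 1 : ℕ) : ℤ) with hidef
      have hival : (i : ℕ) = n - m := by
        have := L33.negIdx_val n (m + 1) (by omega) hk
        omega
      have hi0 : i ≠ 0 := by
        intro h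
        rw [h] at hival
        simp at hival
        omega
      have hi1val : ((i - 1 : Fin (n + 1)) : ℕ) = n - m - 1 := by
        rw [Fin.coe_sub_one, if_neg hi0]
        omega
      have hc1 : (w m).1 (i - 1) = u (i - 1) := K2 _ (by omega)
      have hc2 : u topIdx ≤ (w m).1 i + m * L := K3 i hival
      have hc3 : u (i - 1) + ((n + 2) * L + 1) ≤ u topIdx := hdom' _ (by omega)
      have hdomi : (w m).1 (i - 1) + 2 * L + 1 ≤ (w m).1 i := by
        have hmn : m * L + 2 * L ≤ (n + 1) * L := by
          calc m * L + 2 * L = (m + 2) * L := by ring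
            _ ≤ (n + 1) * L := Nat.mul_le_mul_right L (by omega)
        have hn2 : (n + 2) * L = (n + 1) * L + L := by ring
        omega
      obtain ⟨q, hq, hq2, hq3, hq4, hq5, hq6⟩ :=
        L33.step_lemma hn N' l L (le_of_eq hLdef.symm) i (w m).1 (w m).2 K1 hdomi
      erw [show ((w m).1, (w m).2) = w m from rfl] at hq hq4
      have hqw : w (m + 1) = q := by
        rw [hwsucc m, ← hidef, hq]
        rfl
      refine ⟨?_, ?_, ?_, ?_⟩
      · rw [hqw]; exact hq2
      · intro j hj
        rw [hqw]
        have hji : j ≠ i := by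
          intro h; rw [h] at hj; omega
        have hji1 : j ≠ i - 1 := by
          intro h; rw [h] at hj; omega
        rw [hq3 j hji hji1]
        exact K2 j (by omega)
      · intro j hj
        rw [hqw]
        have hji1 : j = i - 1 := by
          apply Fin.ext
          omega
        rw [hji1]
        have hml : (m + 1) * L = m * L + L := by ring
        omega
      · intro _
        refine ⟨?_, ?_⟩
        · show ((BA n).tensor (BPow n N')).S (negIdx n ((m + 1 : ℕ) : ℤ)) (w (m + 1 - 1)) = some (w (m + 1))
          rw [hqw, ← hidef]
          simpa using hq
        · show (BA n).eps (negIdx n ((m + 1 : ℕ) : ℤ)) (w (m + 1)).1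
              = ((BA n).tensor (BPow n N')).phi (negIdx n ((m + 1 : ℕ) : ℤ)) (w (m + 1 - 1))
          rw [hqw, ← hidef]
          simpa using hq4
  refine ⟨w, hw0, ?_, ?_⟩
  · intro k hk1 hk2
    exact ((key k hk2).2.2.2 hk1).1
  · intro k hk1 hk2
    exact ((key k hk2).2.2.2 hk1).2
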